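/- Conditioned on the good event ⋂_{t≥1} G_t, for any time t ≥ 1, if the number of round-robin exploration rounds executed by Algorithm 1 up to time t satisfies N_explore(t) > K + 96 K log(T) / Δ_A(μ, γ)², then the UCB-LCB partial rank at time t lies in the admissible set: (P_u(t), P_a(t)) ∈ A(F*_u, F*_a). -/

import Mathlib

/-!
Two-sided matching markets: partial ranks, full ranks, stable and super-stable
matchings, following Irving (1994) and Spieker (1995).

Statement 0: For any partial rank `(P_u, P_a)` over `N` users and `K` arms, the
set of super-stable matchings equals the intersection, over all full ranks
compatible with `(P_u, P_a)`, of the sets of stable matchings.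
-/

/-- A partial rank: a strict partial order for each user over the arms
(`u i j j'` means user `i` strictly prefers arm `j` to arm `j'`) and a strict
partial order for each arm over the users. -/
structure PartialRank (N K : ℕ) where
  u : Fin N → Fin K → Fin K → Prop
  a : Fin K → Fin N → Fin N → Prop
  u_irrefl : ∀ i j, ¬ u i j j
  u_trans : ∀ i j₁ j₂ j₃, u i j₁ j₂ → u i j₂ j₃ → u i j₁ j₃
  a_irrefl : ∀ j i, ¬ a j i i
  a_trans : ∀ j i₁ i₂ i₃, a j i₁ i₂ → a j i₂ i₃ → a j i₁ i₃

/-- A full rank is a partial rank in which each of the orders is total. -/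
def PartialRank.IsFull {N K : ℕ} (P : PartialRank N K) : Prop :=
  (∀ i j j', j ≠ j' → P.u i j j' ∨ P.u i j' j) ∧
  (∀ j i i', i ≠ i' → P.a j i i' ∨ P.a j i' i)

/-- A matching: an injective assignment of users to arms (with `N ≤ K` every
user can be matched). -/
def Matching (N K : ℕ) := {f : Fin N → Fin K // Function.Injective f}

/-- `(i, j)` is a blocking pair for `M` under the (full) rank `F`: user `i` and
arm `j` are not matched to each other, user `i` strictly prefers `j` to her
match, and arm `j` strictly prefers `i` to its match (an unmatched arm prefers
any user). -/
def Blocks {N K : ℕ} (F : PartialRank N K) (M : Matching N K)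
    (i : Fin N) (j : Fin K) : Prop :=
  M.1 i ≠ j ∧ F.u i j (M.1 i) ∧ ∀ i', M.1 i' = j → F.a j i i'

/-- A matching is stable under `F` if it admits no blocking pair. -/
def IsStable {N K : ℕ} (F : PartialRank N K) (M : Matching N K) : Prop :=
  ∀ i j, ¬ Blocks F M i j

/-- The set of stable matchings of a (full) rank. -/
def stableSet {N K : ℕ} (F : PartialRank N K) : Set (Matching N K) :=
  {M | IsStable F M}

/-- `(i, j)` super-blocks `M` under the partial rank `P`: user `i` and arm `j`
are not matched to each other, user `i` prefers or is indifferent to `j`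
compared to her match (i.e. does not strictly disprefer `j`), and arm `j`
prefers or is indifferent to `i` compared to its match. -/
def SuperBlocks {N K : ℕ} (P : PartialRank N K) (M : Matching N K)
    (i : Fin N) (j : Fin K) : Prop :=
  M.1 i ≠ j ∧ ¬ P.u i (M.1 i) j ∧ ∀ i', M.1 i' = j → ¬ P.a j i' i

/-- A matching is super-stable under `P` if it admits no super-blocking pair. -/
def IsSuperStable {N K : ℕ} (P : PartialRank N K) (M : Matching N K) : Prop :=
  ∀ i j, ¬ SuperBlocks P M i j

/-- The set of super-stable matchings of a partial rank. -/
def superStableSet {N K : ℕ} (P : PartialRank N K) : Set (Matching N K) :=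
  {M | IsSuperStable P M}

/-- `P'` is compatible with `P` if no strict comparison of `P'` is reversed
in `P`. -/
def Compatible {N K : ℕ} (P' P : PartialRank N K) : Prop :=
  (∀ i j j', P'.u i j j' → ¬ P.u i j' j) ∧
  (∀ j i i', P'.a j i i' → ¬ P.a j i' i)

/-- The set of full ranks compatible with a given partial rank. -/
def fullRankSet {N K : ℕ} (P : PartialRank N K) : Set (PartialRank N K) :=
  {F | F.IsFull ∧ Compatible F P}

/-- A partial rank `P` is admissible for a full rank `F` if `F` is compatible
with `P` and `P` has at least one super-stable matching. -/
def Admissible {N K : ℕ} (F P : PartialRank N K) : Prop :=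
  F ∈ fullRankSet P ∧ (superStableSet P).Nonempty

/-- The rank induced by rewards: a user strictly prefers the arm with higher
reward, and an arm strictly prefers the user with higher reward.  When there
are no ties within rows this is a full rank. -/
def inducedRank {N K : ℕ} (μ : Fin N → Fin K → ℝ) (γ : Fin K → Fin N → ℝ) :
    PartialRank N K where
  u := fun i j j' => μ i j' < μ i j
  a := fun j i i' => γ j i' < γ j i
  u_irrefl := fun _ _ => lt_irrefl _
  u_trans := fun _ _ _ _ h h' => lt_trans h' h
  a_irrefl := fun _ _ => lt_irrefl _
  a_trans := fun _ _ _ _ h h' => lt_trans h' h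

/-- The minimum gap of a partial rank with respect to rewards: the smallest
absolute reward difference over strictly comparable pairs of arms (for some
user) or strictly comparable pairs of users (for some arm). -/
noncomputable def minGap {N K : ℕ} (P : PartialRank N K)
    (μ : Fin N → Fin K → ℝ) (γ : Fin K → Fin N → ℝ) : ℝ :=
  sInf ({d | ∃ i j j', (P.u i j j' ∨ P.u i j' j) ∧ d = |μ i j - μ i j'|} ∪
        {d | ∃ j i i', (P.a j i i' ∨ P.a j i' i) ∧ d = |γ j i - γ j i'|})

/-- The overlap width of a partial rank with respect to rewards: the largest
absolute reward difference over distinct incomparable (tied) pairs. -/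
noncomputable def overlapWidth {N K : ℕ} (P : PartialRank N K)
    (μ : Fin N → Fin K → ℝ) (γ : Fin K → Fin N → ℝ) : ℝ :=
  sSup ({d | ∃ i j j', j ≠ j' ∧ ¬ P.u i j j' ∧ ¬ P.u i j' j ∧ d = |μ i j - μ i j'|} ∪
        {d | ∃ j i i', i ≠ i' ∧ ¬ P.a j i i' ∧ ¬ P.a j i' i ∧ d = |γ j i - γ j i'|})

/-- The admissible gap: the largest minimum gap over all partial ranks
admissible for the full rank induced by the rewards. -/
noncomputable def admissibleGap {N K : ℕ}
    (μ : Fin N → Fin K → ℝ) (γ : Fin K → Fin N → ℝ) : ℝ :=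
  sSup {d | ∃ P : PartialRank N K,
    Admissible (inducedRank μ γ) P ∧ d = minGap P μ γ}

/-- The UCB-LCB partial rank built from empirical means `hatμ, hatγ` and sample
counts `n` at time `t`: an item is placed strictly above another iff (both have
been sampled and) the former's LCB exceeds the latter's UCB, with bonus
`√(6 log t / n)`. -/
noncomputable def ucbLcbRank {N K : ℕ} (hatμ : Fin N → Fin K → ℝ)
    (hatγ : Fin K → Fin N → ℝ) (n : Fin N → Fin K → ℕ) (t : ℕ) :
    PartialRank N K where
  u := fun i j j' =>
    0 < n i j ∧ 0 < n i j' ∧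
    hatμ i j' + Real.sqrt (6 * Real.log t / (n i j' : ℝ)) <
      hatμ i j - Real.sqrt (6 * Real.log t / (n i j : ℝ))
  a := fun j i i' =>
    0 < n i j ∧ 0 < n i' j ∧
    hatγ j i' + Real.sqrt (6 * Real.log t / (n i' j : ℝ)) <
      hatγ j i - Real.sqrt (6 * Real.log t / (n i j : ℝ))
  u_irrefl := by
    intro i j h
    have h1 := Real.sqrt_nonneg (6 * Real.log t / (n i j : ℝ))
    linarith [h.2.2]
  u_trans := by
    intro i j₁ j₂ j₃ h h'
    refine ⟨h.1, h'.2.1, ?_⟩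
    have h2 := Real.sqrt_nonneg (6 * Real.log t / (n i j₂ : ℝ))
    linarith [h.2.2, h'.2.2]
  a_irrefl := by
    intro j i h
    have h1 := Real.sqrt_nonneg (6 * Real.log t / (n i j : ℝ))
    linarith [h.2.2]
  a_trans := by
    intro j i₁ i₂ i₃ h h'
    refine ⟨h.1, h'.2.1, ?_⟩
    have h2 := Real.sqrt_nonneg (6 * Real.log t / (n i₂ j : ℝ))
    linarith [h.2.2, h'.2.2]

open scoped Classical

/-- Number of times the pair `(i, j)` has been matched during rounds
`1, …, t-1` of the trajectory `matchAt`. -/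
def cnt {N K : ℕ} (matchAt : ℕ → Matching N K) (i : Fin N) (j : Fin K)
    (t : ℕ) : ℕ :=
  ((Finset.Icc 1 (t - 1)).filter (fun s => (matchAt s).1 i = j)).card

/-- The user-side empirical mean of pair `(i, j)` at time `t`: the true mean
plus the average of the observed noise samples (`η i j k` is the noise of the
`k`-th sample of the pair). -/
noncomputable def hatMu {N K : ℕ} (μ : Fin N → Fin K → ℝ)
    (η : Fin N → Fin K → ℕ → ℝ) (matchAt : ℕ → Matching N K)
    (i : Fin N) (j : Fin K) (t : ℕ) : ℝ :=
  μ i j + (∑ k ∈ Finset.range (cnt matchAt i j t), η i j k) /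
    (cnt matchAt i j t : ℝ)

/-- The arm-side empirical mean of pair `(i, j)` at time `t`. -/
noncomputable def hatGa {N K : ℕ} (γ : Fin K → Fin N → ℝ)
    (η' : Fin N → Fin K → ℕ → ℝ) (matchAt : ℕ → Matching N K)
    (i : Fin N) (j : Fin K) (t : ℕ) : ℝ :=
  γ j i + (∑ k ∈ Finset.range (cnt matchAt i j t), η' i j k) /
    (cnt matchAt i j t : ℝ)

/-- The UCB-LCB partial rank of the trajectory at time `t`. -/
noncomputable def trajRank {N K : ℕ} (μ : Fin N → Fin K → ℝ)
    (γ : Fin K → Fin N → ℝ) (η η' : Fin N → Fin K → ℕ → ℝ)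
    (matchAt : ℕ → Matching N K) (t : ℕ) : PartialRank N K :=
  ucbLcbRank (fun i j => hatMu μ η matchAt i j t)
    (fun j i => hatGa γ η' matchAt i j t)
    (fun i j => cnt matchAt i j t) t

/-- The number of exploration rounds (rounds whose UCB-LCB partial rank has no
super-stable matching, so that Extended Gale–Shapley returns `∅` and Algorithm 1
explores) among rounds `1, …, t-1`. -/
noncomputable def nExplore {N K : ℕ} (μ : Fin N → Fin K → ℝ)
    (γ : Fin K → Fin N → ℝ) (η η' : Fin N → Fin K → ℕ → ℝ)
    (matchAt : ℕ → Matching N K) (t : ℕ) : ℕ :=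
  ((Finset.Icc 1 (t - 1)).filter
    (fun s => superStableSet (trajRank μ γ η η' matchAt s) = ∅)).card

/-- The round-robin exploration matching with exploration index `τ`:
user `i` is matched to arm `(i + τ) mod K`. -/
def roundRobin {N K : ℕ} (hNK : N ≤ K) (hK : 0 < K) (τ : ℕ) : Matching N K :=
  ⟨fun i => ⟨((i : ℕ) + τ) % K, Nat.mod_lt _ hK⟩, by
    intro a b hab
    have h : ((a : ℕ) + τ) % K = ((b : ℕ) + τ) % K := congrArg Fin.val hab
    have ha : (a : ℕ) % K = (b : ℕ) % K := Nat.ModEq.add_right_cancel' τ h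
    have : (a : ℕ) = (b : ℕ) := by
      rwa [Nat.mod_eq_of_lt (lt_of_lt_of_le a.2 hNK),
        Nat.mod_eq_of_lt (lt_of_lt_of_le b.2 hNK)] at ha
    exact Fin.ext this⟩

/-- The good event along the trajectory: at every time and for every sampled
pair, the empirical means are within `√(6 log t / n_{i,j}(t))` of the truth. -/
def GoodTraj {N K : ℕ} (μ : Fin N → Fin K → ℝ) (γ : Fin K → Fin N → ℝ)
    (η η' : Fin N → Fin K → ℕ → ℝ) (matchAt : ℕ → Matching N K) : Prop :=
  ∀ t, 1 ≤ t → ∀ (i : Fin N) (j : Fin K), 0 < cnt matchAt i j t →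
    |μ i j - hatMu μ η matchAt i j t| ≤
      Real.sqrt (6 * Real.log t / (cnt matchAt i j t : ℝ)) ∧
    |γ j i - hatGa γ η' matchAt i j t| ≤
      Real.sqrt (6 * Real.log t / (cnt matchAt i j t : ℝ))


/-! ### Auxiliary machinery -/

theorem PartialRank.u_asymm {N K : ℕ} (P : PartialRank N K) {i j j'}
    (h : P.u i j j') : ¬ P.u i j' j :=
  fun h' => P.u_irrefl i j (P.u_trans i j j' j h h')

theorem PartialRank.a_asymm {N K : ℕ} (P : PartialRank N K) {j i i'}
    (h : P.a j i i') : ¬ P.a j i' i :=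
  fun h' => P.a_irrefl j i (P.a_trans j i i' i h h')

section GS

variable {N K : ℕ}

/-- Numeric key encoding a user's preference order. -/
noncomputable def keyU (F : PartialRank N K) (i : Fin N) (j : Fin K) : ℕ :=
  (Finset.univ.filter (fun x => F.u i j x)).card

/-- Numeric key encoding an arm's preference order. -/
noncomputable def keyA (F : PartialRank N K) (j : Fin K) (i : Fin N) : ℕ :=
  (Finset.univ.filter (fun x => F.a j i x)).card

theorem keyU_lt (F : PartialRank N K) (hF : F.IsFull) {i : Fin N} {j j' : Fin K} :
    F.u i j j' ↔ keyU F i j' < keyU F i j := by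
  constructor
  · intro h
    apply Finset.card_lt_card
    have hsub : Finset.univ.filter (fun x => F.u i j' x) ⊆
        Finset.univ.filter (fun x => F.u i j x) := by
      intro x hx
      rw [Finset.mem_filter] at hx ⊢
      exact ⟨hx.1, F.u_trans i j j' x h hx.2⟩
    rw [Finset.ssubset_iff_of_subset hsub]
    exact ⟨j', Finset.mem_filter.2 ⟨Finset.mem_univ _, h⟩,
      fun hc => F.u_irrefl i j' (Finset.mem_filter.1 hc).2⟩
  · intro h
    by_contra hne
    rcases eq_or_ne j j' with rfl | hjj
    · exact lt_irrefl _ h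
    · rcases hF.1 i j j' hjj with h1 | h2
      · exact hne h1
      · exact lt_asymm h ((keyU_lt F hF).1 h2)

theorem keyA_lt (F : PartialRank N K) (hF : F.IsFull) {j : Fin K} {i i' : Fin N} :
    F.a j i i' ↔ keyA F j i' < keyA F j i := by
  constructor
  · intro h
    apply Finset.card_lt_card
    have hsub : Finset.univ.filter (fun x => F.a j i' x) ⊆
        Finset.univ.filter (fun x => F.a j i x) := by
      intro x hx
      rw [Finset.mem_filter] at hx ⊢
      exact ⟨hx.1, F.a_trans j i i' x h hx.2⟩
    rw [Finset.ssubset_iff_of_subset hsub]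
    exact ⟨i', Finset.mem_filter.2 ⟨Finset.mem_univ _, h⟩,
      fun hc => F.a_irrefl j i' (Finset.mem_filter.1 hc).2⟩
  · intro h
    by_contra hne
    rcases eq_or_ne i i' with rfl | hii
    · exact lt_irrefl _ h
    · rcases hF.2 j i i' hii with h1 | h2
      · exact hne h1
      · exact lt_asymm h ((keyA_lt F hF).1 h2)

/-- The favourite arm of user `i` within a set of arms. -/
noncomputable def top (F : PartialRank N K) (hK : 0 < K) (i : Fin N)
    (s : Finset (Fin K)) : Fin K :=
  if hs : s.Nonempty then (s.exists_max_image (keyU F i) hs).choose else ⟨0, hK⟩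

theorem top_mem (F : PartialRank N K) (hK : 0 < K) (i : Fin N)
    {s : Finset (Fin K)} (hs : s.Nonempty) : top F hK i s ∈ s := by
  rw [top, dif_pos hs]
  exact (s.exists_max_image (keyU F i) hs).choose_spec.1

theorem top_max (F : PartialRank N K) (hK : 0 < K) (i : Fin N)
    {s : Finset (Fin K)} (hs : s.Nonempty) :
    ∀ j ∈ s, keyU F i j ≤ keyU F i (top F hK i s) := by
  rw [top, dif_pos hs]
  exact (s.exists_max_image (keyU F i) hs).choose_spec.2

/-- The Gale–Shapley invariant on the rejection sets. -/
def GSInv (F : PartialRank N K) (hK : 0 < K) (R : Fin N → Finset (Fin K)) : Prop :=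
  ∀ i j, j ∈ R i → ∃ i', F.a j i' i ∧ top F hK i' (Finset.univ \ R i') = j

theorem compl_nonempty (F : PartialRank N K) (hK : 0 < K) (hNK : N ≤ K)
    {R : Fin N → Finset (Fin K)} (hR : GSInv F hK R) (i : Fin N) :
    (Finset.univ \ R i).Nonempty := by
  by_contra h
  have hall : ∀ j : Fin K, j ∈ R i := by
    intro j; by_contra hj
    exact h ⟨j, Finset.mem_sdiff.2 ⟨Finset.mem_univ _, hj⟩⟩
  set g : Fin K → Fin N := fun j => (hR i j (hall j)).choose with hg
  have hga : ∀ j, F.a j (g j) i := fun j => (hR i j (hall j)).choose_spec.1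
  have hgt : ∀ j, top F hK (g j) (Finset.univ \ R (g j)) = j :=
    fun j => (hR i j (hall j)).choose_spec.2
  have hginj : Function.Injective g := by
    intro j1 j2 he
    rw [← hgt j1, ← hgt j2, he]
  have hKN : K ≤ N := by simpa using Fintype.card_le_of_injective g hginj
  have himg : Finset.univ.image g = Finset.univ := by
    apply Finset.eq_univ_of_card
    rw [Finset.card_image_of_injective _ hginj]
    simp [le_antisymm hNK hKN]
  have hi : i ∈ Finset.univ.image g := by rw [himg]; exact Finset.mem_univ i
  obtain ⟨j, -, hj⟩ := Finset.mem_image.1 hi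
  exact F.a_irrefl j i (hj ▸ hga j)

theorem stable_of_fixpoint (F : PartialRank N K) (hF : F.IsFull) (hNK : N ≤ K)
    (hK : 0 < K) {R : Fin N → Finset (Fin K)} (hR : GSInv F hK R)
    (hinj : Function.Injective (fun i => top F hK i (Finset.univ \ R i))) :
    ∃ M : Matching N K, IsStable F M := by
  refine ⟨⟨fun i => top F hK i (Finset.univ \ R i), hinj⟩, ?_⟩
  rintro i j ⟨hne, hpref, hworse⟩
  by_cases hjR : j ∈ R i
  · obtain ⟨i', ha, ht⟩ := hR i j hjR
    exact F.a_asymm ha (hworse i' ht)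
  · have hjc : j ∈ Finset.univ \ R i := Finset.mem_sdiff.2 ⟨Finset.mem_univ _, hjR⟩
    have h1 := top_max F hK i (compl_nonempty F hK hNK hR i) j hjc
    have h2 : keyU F i (top F hK i (Finset.univ \ R i)) < keyU F i j :=
      (keyU_lt F hF).1 hpref
    omega

theorem gs_aux (F : PartialRank N K) (hF : F.IsFull) (hNK : N ≤ K) (hK : 0 < K) :
    ∀ n (R : Fin N → Finset (Fin K)), GSInv F hK R →
      N * K ≤ n + ∑ i, (R i).card → ∃ M : Matching N K, IsStable F M := by
  intro n
  induction n with
  | zero =>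
    intro R hR hbound
    by_cases hinj : Function.Injective (fun i => top F hK i (Finset.univ \ R i))
    · exact stable_of_fixpoint F hF hNK hK hR hinj
    · exfalso
      rw [Function.not_injective_iff] at hinj
      obtain ⟨i1, i2, heq, hne⟩ := hinj
      have hlt : ∑ i, (R i).card < ∑ _i : Fin N, K := by
        refine Finset.sum_lt_sum (fun i _ => ?_) ⟨i1, Finset.mem_univ _, ?_⟩
        · calc (R i).card ≤ (Finset.univ : Finset (Fin K)).card :=
              Finset.card_le_card (Finset.subset_univ _)
            _ = K := by simp
        · obtain ⟨j, hj⟩ := compl_nonempty F hK hNK hR i1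
          have hss : R i1 ⊂ Finset.univ :=
            ⟨Finset.subset_univ _,
             fun hsub => (Finset.mem_sdiff.1 hj).2 (hsub (Finset.mem_univ j))⟩
          have := Finset.card_lt_card hss
          simpa using this
      have hsum : ∑ _i : Fin N, K = N * K := by simp [Finset.sum_const, mul_comm]
      omega
  | succ n ih =>
    intro R hR hbound
    by_cases hinj : Function.Injective (fun i => top F hK i (Finset.univ \ R i))
    · exact stable_of_fixpoint F hF hNK hK hR hinj
    · rw [Function.not_injective_iff] at hinj
      obtain ⟨i1, i2, heq, hne⟩ := hinj
      set P : Fin N → Fin K := fun i => top F hK i (Finset.univ \ R i) with hP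
      set j : Fin K := P i1 with hj
      set Pr : Finset (Fin N) := Finset.univ.filter (fun i => P i = j) with hPr
      have hi1 : i1 ∈ Pr := by simp [hPr, hj]
      have hi2 : i2 ∈ Pr := by
        rw [hPr, Finset.mem_filter]
        exact ⟨Finset.mem_univ _, by rw [hj]; exact heq.symm⟩
      obtain ⟨ib, hibm, hibmax⟩ := Pr.exists_max_image (keyA F j) ⟨i1, hi1⟩
      set iw : Fin N := if ib = i1 then i2 else i1 with hiw
      have hiwm : iw ∈ Pr := by
        rw [hiw]; split <;> assumption
      have hiwb : iw ≠ ib := by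
        rw [hiw]; split
        · rename_i hh; rw [hh]; exact fun hc => hne (hc.symm)
        · rename_i hh; exact fun hc => hh hc.symm
      have hPiw : P iw = j := (Finset.mem_filter.1 hiwm).2
      have hPib : P ib = j := (Finset.mem_filter.1 hibm).2
      have haib : F.a j ib iw := by
        have h1 := hibmax iw hiwm
        have h2 : keyA F j iw ≠ keyA F j ib := by
          intro hc
          rcases hF.2 j iw ib hiwb with ha | ha
          · exact absurd hc (Nat.ne_of_gt ((keyA_lt F hF).1 ha))
          · exact absurd hc (Nat.ne_of_lt ((keyA_lt F hF).1 ha))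
        exact (keyA_lt F hF).2 (lt_of_le_of_ne h1 h2)
      have hjnotR : j ∉ R iw := by
        have hm := top_mem F hK iw (compl_nonempty F hK hNK hR iw)
        rw [show top F hK iw (Finset.univ \ R iw) = j from hPiw] at hm
        exact (Finset.mem_sdiff.1 hm).2
      set R' : Fin N → Finset (Fin K) :=
        Function.update R iw (insert j (R iw)) with hR'
      have hInv' : GSInv F hK R' := by
        intro i j0 hmem
        by_cases hiiw : i = iw
        · subst hiiw
          rw [hR', Function.update_self] at hmem
          rcases Finset.mem_insert.1 hmem with hj0 | hold
          · subst hj0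
            refine ⟨ib, haib, ?_⟩
            rw [hR', Function.update_of_ne (fun hc => hiwb hc.symm)]
            exact hPib
          · obtain ⟨i', ha, ht⟩ := hR iw j0 hold
            have hi'ne : i' ≠ iw := by
              intro hc; subst hc
              have hPij0 : P iw = j0 := ht
              have : j0 = j := by rw [← hPij0]; exact hPiw
              exact hjnotR (this ▸ hold)
            exact ⟨i', ha, by rw [hR', Function.update_of_ne hi'ne]; exact ht⟩
        · have hmem' : j0 ∈ R i := by
            rwa [hR', Function.update_of_ne hiiw] at hmem
          obtain ⟨i', ha, ht⟩ := hR i j0 hmem'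
          by_cases hi'iw : i' = iw
          · subst hi'iw
            have hPij0 : P iw = j0 := ht
            have hj0 : j0 = j := by rw [← hPij0]; exact hPiw
            refine ⟨ib, ?_, ?_⟩
            · rw [hj0]; rw [hj0] at ha
              exact F.a_trans j ib iw i haib ha
            · rw [hR', Function.update_of_ne (fun hc => hiwb hc.symm), hj0]
              exact hPib
          · exact ⟨i', ha, by rw [hR', Function.update_of_ne hi'iw]; exact ht⟩
      have hsum : ∑ i, (R' i).card = (∑ i, (R i).card) + 1 := by
        have hpt : ∀ x, (R' x).card =
            Function.update (fun i => (R i).card) iw ((R iw).card + 1) x := by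
          intro x
          by_cases hx : x = iw
          · subst hx
            rw [hR', Function.update_self, Function.update_self,
              Finset.card_insert_of_notMem hjnotR]
          · rw [hR', Function.update_of_ne hx, Function.update_of_ne hx]
        rw [Finset.sum_congr rfl (fun x _ => hpt x),
          Finset.sum_update_of_mem (Finset.mem_univ iw),
          Finset.sum_eq_add_sum_sdiff_singleton_of_mem (Finset.mem_univ iw)
            (fun i => (R i).card)]
        omega
      exact ih R' hInv' (by omega)

theorem exists_stable (F : PartialRank N K) (hF : F.IsFull) (hNK : N ≤ K)
    (hK : 0 < K) : ∃ M : Matching N K, IsStable F M := by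
  refine gs_aux F hF hNK hK (N * K) (fun _ => ∅) ?_ ?_
  · intro i j h; simp at h
  · simp

theorem isSuperStable_of_isStable (F : PartialRank N K) (hF : F.IsFull)
    {M : Matching N K} (h : IsStable F M) : IsSuperStable F M := by
  rintro i j ⟨hne, hnu, hall⟩
  refine h i j ⟨hne, ?_, ?_⟩
  · rcases hF.1 i j (M.1 i) (fun hc => hne hc.symm) with h1 | h2
    · exact h1
    · exact absurd h2 hnu
  · intro i' hi'
    have hii' : i ≠ i' := fun hc => hne (hc ▸ hi')
    rcases hF.2 j i i' hii' with h1 | h2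
    · exact h1
    · exact absurd h2 (hall i' hi')

theorem isSuperStable_mono {P Q : PartialRank N K}
    (hu : ∀ i j j', P.u i j j' → Q.u i j j')
    (ha : ∀ j i i', P.a j i i' → Q.a j i i')
    {M : Matching N K} (h : IsSuperStable P M) : IsSuperStable Q M := by
  rintro i j ⟨hne, hnu, hall⟩
  exact h i j ⟨hne, fun hp => hnu (hu _ _ _ hp),
    fun i' hi' hp => hall i' hi' (ha _ _ _ hp)⟩

end GS

theorem finite_partialRank (N K : ℕ) : Finite (PartialRank N K) := by
  have hinj : Function.Injective
      (fun P : PartialRank N K => (P.u, P.a)) := by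
    intro P Q h
    cases P; cases Q
    simp only [Prod.mk.injEq] at h
    obtain ⟨h1, h2⟩ := h
    subst h1; subst h2; rfl
  exact Finite.of_injective _ hinj

theorem count_residue (K a r : ℕ) (hr : r < K) :
    ∀ E, E ≤ K * (((Finset.range E).filter (fun τ => (a + τ) % K = r)).card + 1) := by
  have hK : 0 < K := lt_of_le_of_lt (Nat.zero_le r) hr
  intro E
  induction E using Nat.strong_induction_on with
  | _ E ih =>
    by_cases hE : E ≤ K
    · calc E ≤ K := hE
        _ ≤ K * (((Finset.range E).filter (fun τ => (a + τ) % K = r)).card + 1) :=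
          Nat.le_mul_of_pos_right _ (Nat.succ_pos _)
    · push_neg at hE
      set τ0 := (r + K - a % K) % K with hτ0
      have hτ0K : τ0 < K := Nat.mod_lt _ hK
      have hb : a % K < K := Nat.mod_lt _ hK
      have hτ0r : (a + τ0) % K = r := by
        calc (a + τ0) % K = (a % K + τ0 % K) % K := by rw [Nat.add_mod]
          _ = (a % K + τ0) % K := by rw [Nat.mod_eq_of_lt hτ0K]
          _ = (a % K + (r + K - a % K) % K) % K := by rw [hτ0]
          _ = (a % K + (r + K - a % K)) % K := Nat.add_mod_mod _ _ _
          _ = (r + K) % K := by congr 1; omega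
          _ = r := by rw [Nat.add_mod_right, Nat.mod_eq_of_lt hr]
      have hsub : insert τ0
          (((Finset.range (E - K)).filter (fun τ => (a + τ) % K = r)).image (· + K))
          ⊆ (Finset.range E).filter (fun τ => (a + τ) % K = r) := by
        intro x hx
        rcases Finset.mem_insert.1 hx with h | h
        · subst h
          exact Finset.mem_filter.2 ⟨Finset.mem_range.2 (lt_trans hτ0K hE), hτ0r⟩
        · obtain ⟨τ, hτ, rfl⟩ := Finset.mem_image.1 h
          obtain ⟨hτE, hτr⟩ := Finset.mem_filter.1 hτ
          have hτE' := Finset.mem_range.1 hτE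
          refine Finset.mem_filter.2 ⟨Finset.mem_range.2 (by omega), ?_⟩
          rw [show a + (τ + K) = (a + τ) + K by ring, Nat.add_mod_right]
          exact hτr
      have hnotmem : τ0 ∉
          ((Finset.range (E - K)).filter (fun τ => (a + τ) % K = r)).image (· + K) := by
        intro hmem
        obtain ⟨τ, -, hτ⟩ := Finset.mem_image.1 hmem
        omega
      have hcard : ((Finset.range (E - K)).filter (fun τ => (a + τ) % K = r)).card + 1
          ≤ ((Finset.range E).filter (fun τ => (a + τ) % K = r)).card := by
        have h1 := Finset.card_le_card hsub
        rw [Finset.card_insert_of_notMem hnotmem,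
          Finset.card_image_of_injective _ (add_left_injective K)] at h1
        exact h1
      have hih := ih (E - K) (by omega)
      set c' := ((Finset.range (E - K)).filter (fun τ => (a + τ) % K = r)).card
      calc E = (E - K) + K := by omega
        _ ≤ K * (c' + 1) + K := by omega
        _ = K * (c' + 2) := by ring
        _ ≤ K * (((Finset.range E).filter (fun τ => (a + τ) % K = r)).card + 1) :=
          Nat.mul_le_mul_left K (by omega)

theorem enum_image (S : Finset ℕ) :
    Set.InjOn (fun s => (S.filter (· < s)).card) ↑S ∧
    S.image (fun s => (S.filter (· < s)).card) = Finset.range S.card := by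
  have hmono : ∀ s ∈ S, ∀ s' ∈ S, s < s' →
      (S.filter (· < s)).card < (S.filter (· < s')).card := by
    intro s hs s' hs' hss
    apply Finset.card_lt_card
    have hsub : S.filter (· < s) ⊆ S.filter (· < s') := by
      intro x hx
      rw [Finset.mem_filter] at hx ⊢
      exact ⟨hx.1, lt_trans hx.2 hss⟩
    rw [Finset.ssubset_iff_of_subset hsub]
    exact ⟨s, Finset.mem_filter.2 ⟨hs, hss⟩, fun hc => lt_irrefl s (Finset.mem_filter.1 hc).2⟩
  have hinj : Set.InjOn (fun s => (S.filter (· < s)).card) ↑S := by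
    intro s hs s' hs' he
    by_contra hne
    rcases lt_or_gt_of_ne hne with h | h
    · exact absurd he (Nat.ne_of_lt (hmono s hs s' hs' h))
    · exact absurd he.symm (Nat.ne_of_lt (hmono s' hs' s hs h))
  refine ⟨hinj, ?_⟩
  have hsubs : S.image (fun s => (S.filter (· < s)).card) ⊆ Finset.range S.card := by
    intro x hx
    obtain ⟨s, hs, rfl⟩ := Finset.mem_image.1 hx
    apply Finset.mem_range.2
    apply Finset.card_lt_card
    refine ⟨Finset.filter_subset _ _, fun hsub => ?_⟩
    exact lt_irrefl s (Finset.mem_filter.1 (hsub hs)).2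
  exact Finset.eq_of_subset_of_card_le hsubs
    (by rw [Finset.card_range, Finset.card_image_of_injOn hinj])

/-- Lemma 4, convergence to the admissible set: on the good
event, if Algorithm 1 (which plays the round-robin matching exactly in the
rounds whose partial rank has no super-stable matching) has performed more than
`K + 96 K log T / Δ_A(μ,γ)²` exploration rounds by time `t ≤ T`, then the
UCB-LCB partial rank at time `t` is admissible for the true full rank. -/
theorem trajRank_admissible_of_explored
    (N K : ℕ) (hN : 0 < N) (hNK : N ≤ K) (hK : 0 < K)
    (μ : Fin N → Fin K → ℝ) (γ : Fin K → Fin N → ℝ)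
    (hμ : ∀ i j j', j ≠ j' → μ i j ≠ μ i j')
    (hγ : ∀ j i i', i ≠ i' → γ j i ≠ γ j i')
    (η η' : Fin N → Fin K → ℕ → ℝ)
    (matchAt : ℕ → Matching N K)
    -- Algorithm 1: a round is a round-robin exploration round exactly when the
    -- Extended Gale–Shapley algorithm finds no super-stable matching
    (halgRR : ∀ t, 1 ≤ t →
      superStableSet (trajRank μ γ η η' matchAt t) = ∅ →
      matchAt t = roundRobin hNK hK (nExplore μ γ η η' matchAt t))
    (hgood : GoodTraj μ γ η η' matchAt)
    (T t : ℕ) (h1t : 1 ≤ t) (htT : t ≤ T)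
    (hexp : (K : ℝ) + 96 * K * Real.log T / (admissibleGap μ γ) ^ 2 <
      (nExplore μ γ η η' matchAt t : ℝ)) :
    Admissible (inducedRank μ γ) (trajRank μ γ η η' matchAt t) := by
  -- Abbreviations
  have hfull : (inducedRank μ γ).IsFull := by
    constructor
    · intro i j j' hne
      rcases lt_trichotomy (μ i j) (μ i j') with h | h | h
      · exact Or.inr h
      · exact absurd h (hμ i j j' hne)
      · exact Or.inl h
    · intro j i i' hne
      rcases lt_trichotomy (γ j i) (γ j i') with h | h | h
      · exact Or.inr h
      · exact absurd h (hγ j i i' hne)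
      · exact Or.inl h
  -- Good event ⇒ any strict comparison of the UCB-LCB rank reflects the truth
  have hPTu : ∀ (i : Fin N) (j j' : Fin K),
      (trajRank μ γ η η' matchAt t).u i j j' → μ i j' < μ i j := by
    intro i j j' h
    obtain ⟨hn, hn', hlt⟩ := h
    have hg1 := abs_le.1 ((hgood t h1t i j hn).1)
    have hg2 := abs_le.1 ((hgood t h1t i j' hn').1)
    have := hg1.2
    have := hg2.1
    linarith [hlt]
  have hPTa : ∀ (j : Fin K) (i i' : Fin N),
      (trajRank μ γ η η' matchAt t).a j i i' → γ j i' < γ j i := by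
    intro j i i' h
    obtain ⟨hn, hn', hlt⟩ := h
    have hg1 := abs_le.1 ((hgood t h1t i j hn).2)
    have hg2 := abs_le.1 ((hgood t h1t i' j hn').2)
    have := hg1.2
    have := hg2.1
    linarith [hlt]
  have hcompat : Compatible (inducedRank μ γ) (trajRank μ γ η η' matchAt t) := by
    constructor
    · intro i j j' h h'
      exact lt_asymm h (hPTu i j' j h')
    · intro j i i' h h'
      exact lt_asymm h (hPTa j i' i h')
  -- Trivial case K = 1
  by_cases hK1 : K = 1
  · refine ⟨⟨hfull, hcompat⟩, roundRobin hNK hK 0, ?_⟩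
    rintro i j ⟨hne, -, -⟩
    apply hne
    have h1 := ((roundRobin hNK hK 0).1 i).2
    have h2 := j.2
    exact Fin.ext (by omega)
  have hK2 : 2 ≤ K := by omega
  -- The true full rank is admissible
  obtain ⟨Mstar, hMstar⟩ := exists_stable (inducedRank μ γ) hfull hNK hK
  have hMsuper : IsSuperStable (inducedRank μ γ) Mstar :=
    isSuperStable_of_isStable (inducedRank μ γ) hfull hMstar
  have hFsadm : Admissible (inducedRank μ γ) (inducedRank μ γ) :=
    ⟨⟨hfull, fun i j j' h => (inducedRank μ γ).u_asymm h,
      fun j i i' h => (inducedRank μ γ).a_asymm h⟩, Mstar, hMsuper⟩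
  -- The minimum gap of the true full rank is positive
  have hgapfin : ∀ P : PartialRank N K,
      ({d | ∃ i j j', (P.u i j j' ∨ P.u i j' j) ∧ d = |μ i j - μ i j'|} ∪
       {d | ∃ j i i', (P.a j i i' ∨ P.a j i' i) ∧ d = |γ j i - γ j i'|} : Set ℝ).Finite := by
    intro P
    apply Set.Finite.subset (Set.finite_range
      (fun x : (Fin N × Fin K × Fin K) ⊕ (Fin K × Fin N × Fin N) =>
        Sum.elim (fun y => |μ y.1 y.2.1 - μ y.1 y.2.2|)
          (fun y => |γ y.1 y.2.1 - γ y.1 y.2.2|) x))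
    rintro d (⟨i, j, j', -, rfl⟩ | ⟨j, i, i', -, rfl⟩)
    · exact ⟨Sum.inl (i, j, j'), rfl⟩
    · exact ⟨Sum.inr (j, i, i'), rfl⟩
  have hgapbdd : ∀ P : PartialRank N K, BddBelow
      ({d | ∃ i j j', (P.u i j j' ∨ P.u i j' j) ∧ d = |μ i j - μ i j'|} ∪
       {d | ∃ j i i', (P.a j i i' ∨ P.a j i' i) ∧ d = |γ j i - γ j i'|} : Set ℝ) := by
    intro P
    refine ⟨0, ?_⟩
    rintro d (⟨i, j, j', -, rfl⟩ | ⟨j, i, i', -, rfl⟩) <;> exact abs_nonneg _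
  have hgap0 : 0 < minGap (inducedRank μ γ) μ γ := by
    have hne01 : (⟨0, hK⟩ : Fin K) ≠ ⟨1, hK2⟩ := by
      intro h; exact absurd (congrArg Fin.val h) (by simp)
    have hSgne : ({d | ∃ i j j', ((inducedRank μ γ).u i j j' ∨ (inducedRank μ γ).u i j' j) ∧
          d = |μ i j - μ i j'|} ∪
        {d | ∃ j i i', ((inducedRank μ γ).a j i i' ∨ (inducedRank μ γ).a j i' i) ∧
          d = |γ j i - γ j i'|} : Set ℝ).Nonempty := by
      refine ⟨|μ ⟨0, hN⟩ ⟨0, hK⟩ - μ ⟨0, hN⟩ ⟨1, hK2⟩|, Or.inl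
        ⟨⟨0, hN⟩, ⟨0, hK⟩, ⟨1, hK2⟩, hfull.1 _ _ _ hne01, rfl⟩⟩
    have hmem := Set.Nonempty.csInf_mem hSgne (hgapfin (inducedRank μ γ))
    unfold minGap
    rcases hmem with ⟨i, j, j', hc, he⟩ | ⟨j, i, i', hc, he⟩
    · rw [he]
      have hjj : j ≠ j' := by
        rintro rfl
        rcases hc with h | h <;> exact (inducedRank μ γ).u_irrefl i j h
      exact abs_pos.2 (sub_ne_zero.2 (hμ i j j' hjj))
    · rw [he]
      have hii : i ≠ i' := by
        rintro rfl
        rcases hc with h | h <;> exact (inducedRank μ γ).a_irrefl j i h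
      exact abs_pos.2 (sub_ne_zero.2 (hγ j i i' hii))
  -- The admissible gap is positive
  have hAsub : {d | ∃ P : PartialRank N K,
      Admissible (inducedRank μ γ) P ∧ d = minGap P μ γ} ⊆
      Set.range (fun P : PartialRank N K => minGap P μ γ) := by
    rintro d ⟨P, -, rfl⟩; exact ⟨P, rfl⟩
  have hAfin : ({d | ∃ P : PartialRank N K,
      Admissible (inducedRank μ γ) P ∧ d = minGap P μ γ} : Set ℝ).Finite := by
    have := finite_partialRank N K
    exact Set.Finite.subset (Set.finite_range _) hAsub
  have hAne : ({d | ∃ P : PartialRank N K,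
      Admissible (inducedRank μ γ) P ∧ d = minGap P μ γ} : Set ℝ).Nonempty :=
    ⟨minGap (inducedRank μ γ) μ γ, inducedRank μ γ, hFsadm, rfl⟩
  have hAdmEq : admissibleGap μ γ = sSup {d | ∃ P : PartialRank N K,
      Admissible (inducedRank μ γ) P ∧ d = minGap P μ γ} := rfl
  have hΔpos : 0 < admissibleGap μ γ := by
    rw [hAdmEq]
    exact lt_of_lt_of_le hgap0 (le_csSup hAfin.bddAbove
      ⟨inducedRank μ γ, hFsadm, rfl⟩)
  -- Counting: every pair has been sampled often
  have hlogT : 0 ≤ Real.log T :=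
    Real.log_nonneg (by exact_mod_cast le_trans h1t htT)
  have hKE : K < nExplore μ γ η η' matchAt t := by
    have h0 : (0:ℝ) ≤ 96 * K * Real.log T / (admissibleGap μ γ) ^ 2 :=
      div_nonneg (by positivity) (sq_nonneg _)
    have : (K : ℝ) < (nExplore μ γ η η' matchAt t : ℝ) := by linarith
    exact_mod_cast this
  set S : Finset ℕ := (Finset.Icc 1 (t - 1)).filter
    (fun s => superStableSet (trajRank μ γ η η' matchAt s) = ∅) with hS
  have hSE : S.card = nExplore μ γ η η' matchAt t := rfl
  obtain ⟨hginj, hgim⟩ := enum_image S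
  have hmatch : ∀ s ∈ S, matchAt s = roundRobin hNK hK ((S.filter (· < s)).card) := by
    intro s hs
    obtain ⟨hsI, hsp⟩ := Finset.mem_filter.1 hs
    obtain ⟨hs1, hst⟩ := Finset.mem_Icc.1 hsI
    have hnE : nExplore μ γ η η' matchAt s = (S.filter (· < s)).card := by
      rw [nExplore]
      congr 1
      ext x
      simp only [hS, Finset.mem_filter, Finset.mem_Icc]
      constructor
      · rintro ⟨⟨hx1, hx2⟩, hpx⟩
        exact ⟨⟨⟨hx1, by omega⟩, hpx⟩, by omega⟩
      · rintro ⟨⟨⟨hx1, hx2⟩, hpx⟩, hxs⟩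
        exact ⟨⟨hx1, by omega⟩, hpx⟩
    rw [← hnE]
    exact halgRR s hs1 hsp
  have hcnt : ∀ (i : Fin N) (j : Fin K),
      nExplore μ γ η η' matchAt t ≤ K * (cnt matchAt i j t + 1) := by
    intro i j
    have h3 : S.filter (fun s => (matchAt s).1 i = j) =
        S.filter (fun s => ((i : ℕ) + (S.filter (· < s)).card) % K = (j : ℕ)) := by
      apply Finset.filter_congr
      intro s hs
      rw [hmatch s hs]
      simp [roundRobin, Fin.ext_iff]
    have h4 : (S.filter (fun s => ((i : ℕ) + (S.filter (· < s)).card) % K = (j : ℕ))).card =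
        ((Finset.range S.card).filter
          (fun τ => ((i : ℕ) + τ) % K = (j : ℕ))).card := by
      rw [← hgim, Finset.filter_image]
      rw [Finset.card_image_of_injOn (hginj.mono (by
        intro x hx
        exact Finset.mem_coe.2 (Finset.filter_subset _ _ (Finset.mem_coe.1 hx))))]
    have h5 := count_residue K (i : ℕ) (j : ℕ) j.2 S.card
    have h2 : (S.filter (fun s => (matchAt s).1 i = j)).card ≤ cnt matchAt i j t := by
      rw [cnt]
      exact Finset.card_le_card
        (Finset.filter_subset_filter _ (Finset.filter_subset _ _))
    rw [← hSE]
    rw [h3, h4] at h2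
    calc S.card ≤ K * (((Finset.range S.card).filter
          (fun τ => ((i : ℕ) + τ) % K = (j : ℕ))).card + 1) := h5
      _ ≤ K * (cnt matchAt i j t + 1) := Nat.mul_le_mul_left K (by omega)
  have hcntpos : ∀ (i : Fin N) (j : Fin K), 0 < cnt matchAt i j t := by
    intro i j
    have h1 := hcnt i j
    by_contra hcon
    push_neg at hcon
    have : cnt matchAt i j t = 0 := by omega
    rw [this] at h1
    simp at h1
    omega
  -- Width bound
  have hEK : (0:ℝ) < (nExplore μ γ η η' matchAt t : ℝ) - K := by
    have : (K : ℝ) < (nExplore μ γ η η' matchAt t : ℝ) := by exact_mod_cast hKE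
    linarith
  have hW0 : (0:ℝ) ≤ Real.sqrt (6 * Real.log T * K /
      ((nExplore μ γ η η' matchAt t : ℝ) - K)) := Real.sqrt_nonneg _
  have hWsq : (Real.sqrt (6 * Real.log T * K /
      ((nExplore μ γ η η' matchAt t : ℝ) - K))) ^ 2 =
      6 * Real.log T * K / ((nExplore μ γ η η' matchAt t : ℝ) - K) :=
    Real.sq_sqrt (by positivity)
  have hwle : ∀ (i : Fin N) (j : Fin K),
      Real.sqrt (6 * Real.log t / (cnt matchAt i j t : ℝ)) ≤
      Real.sqrt (6 * Real.log T * K / ((nExplore μ γ η η' matchAt t : ℝ) - K)) := by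
    intro i j
    apply Real.sqrt_le_sqrt
    have hn : (0:ℝ) < (cnt matchAt i j t : ℝ) := by exact_mod_cast hcntpos i j
    have hlogt : Real.log t ≤ Real.log T :=
      Real.log_le_log (by exact_mod_cast h1t) (by exact_mod_cast htT)
    have hlogt0 : 0 ≤ Real.log t := Real.log_nonneg (by exact_mod_cast h1t)
    rw [div_le_div_iff₀ hn hEK]
    have hEc : (nExplore μ γ η η' matchAt t : ℝ) - K ≤ K * (cnt matchAt i j t : ℝ) := by
      have h1 : (nExplore μ γ η η' matchAt t : ℝ) ≤
          (K : ℝ) * ((cnt matchAt i j t : ℝ) + 1) := by exact_mod_cast hcnt i j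
      nlinarith
    have hm1 : Real.log t * ((nExplore μ γ η η' matchAt t : ℝ) - K) ≤
        Real.log T * ((nExplore μ γ η η' matchAt t : ℝ) - K) :=
      mul_le_mul_of_nonneg_right hlogt (le_of_lt hEK)
    have hm2 : Real.log T * ((nExplore μ γ η η' matchAt t : ℝ) - K) ≤
        Real.log T * (K * (cnt matchAt i j t : ℝ)) :=
      mul_le_mul_of_nonneg_left hEc hlogT
    nlinarith
  -- 4 W < admissible gap
  have h4W : 4 * Real.sqrt (6 * Real.log T * K /
      ((nExplore μ γ η η' matchAt t : ℝ) - K)) < admissibleGap μ γ := by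
    have h1 : 96 * K * Real.log T / (admissibleGap μ γ) ^ 2 <
        (nExplore μ γ η η' matchAt t : ℝ) - K := by linarith
    have h2 : 96 * (K:ℝ) * Real.log T <
        (admissibleGap μ γ) ^ 2 * ((nExplore μ γ η η' matchAt t : ℝ) - K) := by
      rw [div_lt_iff₀ (by positivity : (0:ℝ) < (admissibleGap μ γ) ^ 2)] at h1
      nlinarith
    have hWm : (Real.sqrt (6 * Real.log T * K /
        ((nExplore μ γ η η' matchAt t : ℝ) - K))) ^ 2 *
        ((nExplore μ γ η η' matchAt t : ℝ) - K) = 6 * Real.log T * K := by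
      rw [hWsq]
      field_simp
    have h3 : 16 * (Real.sqrt (6 * Real.log T * K /
        ((nExplore μ γ η η' matchAt t : ℝ) - K))) ^ 2 < (admissibleGap μ γ) ^ 2 := by
      nlinarith
    nlinarith
  -- Pick a nearly-optimal admissible partial rank
  obtain ⟨d, hdmem, hdgt⟩ := exists_lt_of_lt_csSup hAne (by rw [← hAdmEq]; exact h4W)
  obtain ⟨P, hPadm, rfl⟩ := hdmem
  obtain ⟨⟨-, hFsP⟩, MP, hMP⟩ := hPadm
  -- The UCB-LCB partial rank refines P
  have hrefU : ∀ i j j', P.u i j j' → (trajRank μ γ η η' matchAt t).u i j j' := by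
    intro i j j' hPu
    have hjj' : j ≠ j' := by rintro rfl; exact P.u_irrefl i j hPu
    have hμlt : μ i j' < μ i j := by
      rcases hfull.1 i j j' hjj' with h | h
      · exact h
      · exact absurd hPu (hFsP.1 i j' j h)
    have hgap : minGap P μ γ ≤ |μ i j - μ i j'| :=
      csInf_le (hgapbdd P) (Or.inl ⟨i, j, j', Or.inl hPu, rfl⟩)
    rw [abs_of_pos (by linarith)] at hgap
    have hg1 := abs_le.1 ((hgood t h1t i j (hcntpos i j)).1)
    have hg2 := abs_le.1 ((hgood t h1t i j' (hcntpos i j')).1)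
    have hw1 := hwle i j
    have hw2 := hwle i j'
    exact ⟨hcntpos i j, hcntpos i j', by
      have := hg1.1
      have := hg2.2
      linarith⟩
  have hrefA : ∀ j i i', P.a j i i' → (trajRank μ γ η η' matchAt t).a j i i' := by
    intro j i i' hPa
    have hii' : i ≠ i' := by rintro rfl; exact P.a_irrefl j i hPa
    have hγlt : γ j i' < γ j i := by
      rcases hfull.2 j i i' hii' with h | h
      · exact h
      · exact absurd hPa (hFsP.2 j i' i h)
    have hgap : minGap P μ γ ≤ |γ j i - γ j i'| :=
      csInf_le (hgapbdd P) (Or.inr ⟨j, i, i', Or.inl hPa, rfl⟩)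
    rw [abs_of_pos (by linarith)] at hgap
    have hg1 := abs_le.1 ((hgood t h1t i j (hcntpos i j)).2)
    have hg2 := abs_le.1 ((hgood t h1t i' j (hcntpos i' j)).2)
    have hw1 := hwle i j
    have hw2 := hwle i' j
    exact ⟨hcntpos i j, hcntpos i' j, by
      have := hg1.1
      have := hg2.2
      linarith⟩
  exact ⟨⟨hfull, hcompat⟩, MP, isSuperStable_mono hrefU hrefA hMP⟩
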